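/- Let Ω be a finite set with full-support probability measure μ, and assume the product semigroup (P_t) on Ωⁿ is hypercontractive with constant ρ > 0. Let f : Ωⁿ → ℝ satisfy max_{1≤i≤n} ‖L_i f‖_∞ ≤ 1, let η > 0, t > 0, and let T ⊆ {1,…,n} be such that I_i(f) ≤ η for every i ∈ T. Then ‖P_t f − Π_T P_t f‖²_{L²(μ^{⊗n})} ≤ I(f) · η^{(1−e^{−2ρt})/(1+e^{−2ρt})}. -/

import Mathlib

open Finset

variable {Ω : Type} [Fintype Ω] {n : ℕ}

/-- The product weight of the product measure `μ^{⊗n}` on `Ωⁿ`. -/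
def prodWeight (w : Ω → ℝ) (x : Fin n → Ω) : ℝ := ∏ i, w (x i)

/-- The operator `L_i f(x) = ∫_Ω f(x_1,…,y,…,x_n) dμ(y) − f(x)`, as a linear map. -/
noncomputable def Lcoord (w : Ω → ℝ) (i : Fin n) :
    ((Fin n → Ω) → ℝ) →ₗ[ℝ] ((Fin n → Ω) → ℝ) where
  toFun f := fun x => (∑ y, w y * f (Function.update x i y)) - f x
  map_add' f g := by
    funext x
    simp [mul_add, Finset.sum_add_distrib]
    ring
  map_smul' c f := by
    funext x
    simp only [Pi.smul_apply, smul_eq_mul, RingHom.id_apply, mul_sub, Finset.mul_sum]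
    congr 1
    exact Finset.sum_congr rfl fun y _ => by ring

/-- `L = Σ_i L_i`. -/
noncomputable def Ltot (w : Ω → ℝ) (n : ℕ) :
    ((Fin n → Ω) → ℝ) →ₗ[ℝ] ((Fin n → Ω) → ℝ) :=
  ∑ i : Fin n, Lcoord w i

/-- The semigroup `P_t = e^{tL}`. -/
noncomputable def Psemi (w : Ω → ℝ) (n : ℕ) (t : ℝ) : ((Fin n → Ω) → ℝ) → ((Fin n → Ω) → ℝ) :=
  fun f => NormedSpace.exp (t • (LinearMap.toContinuousLinearMap (Ltot w n))) f

/-- `Π_T f` : the function obtained from `f` by integrating out the coordinates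
in `T` against `μ`. -/
noncomputable def PiT (w : Ω → ℝ) (T : Finset (Fin n)) (f : (Fin n → Ω) → ℝ) :
    (Fin n → Ω) → ℝ :=
  fun x => ∑ y : { i // i ∈ T } → Ω, (∏ i : { i // i ∈ T }, w (y i)) *
    f (fun i => if h : i ∈ T then y ⟨i, h⟩ else x i)

/-- The `L¹(μ^{⊗n})` norm. -/
noncomputable def nrm1 (w : Ω → ℝ) (f : (Fin n → Ω) → ℝ) : ℝ :=
  ∑ x, prodWeight w x * |f x|

/-- The square of the `L²(μ^{⊗n})` norm. -/
noncomputable def nrm2sq (w : Ω → ℝ) (f : (Fin n → Ω) → ℝ) : ℝ :=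
  ∑ x, prodWeight w x * (f x) ^ 2

/-- The `L^p(μ^{⊗n})` norm. -/
noncomputable def nrmp (w : Ω → ℝ) (p : ℝ) (f : (Fin n → Ω) → ℝ) : ℝ :=
  (∑ x, prodWeight w x * |f x| ^ p) ^ (1 / p)

/-- The influence of coordinate `i` on `f` : `I_i(f) = ‖L_i f‖_{L¹(μ^{⊗n})}`. -/
noncomputable def influence (w : Ω → ℝ) (i : Fin n) (f : (Fin n → Ω) → ℝ) : ℝ :=
  nrm1 w (Lcoord w i f)

set_option linter.unusedSectionVars false
noncomputable def Eop (w : Ω → ℝ) (i : Fin n) (g : (Fin n → Ω) → ℝ) : (Fin n → Ω) → ℝ :=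
  fun x => ∑ y, w y * g (Function.update x i y)

noncomputable def ip (w : Ω → ℝ) (u v : (Fin n → Ω) → ℝ) : ℝ :=
  ∑ x, prodWeight w x * (u x * v x)

lemma pw_update (w : Ω → ℝ) (x : Fin n → Ω) (i : Fin n) (y : Ω) :
    prodWeight w (Function.update x i y) * w (x i) = prodWeight w x * w y := by
  unfold prodWeight
  have h1 : ∀ j, w (Function.update x i y j) = Function.update (fun j => w (x j)) i (w y) j := by
    intro j
    simp [Function.update_apply, apply_ite w]
  rw [Finset.prod_congr rfl (fun j _ => h1 j), Finset.prod_update_of_mem (Finset.mem_univ i),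
    ← Finset.mul_prod_erase Finset.univ (fun j => w (x j)) (Finset.mem_univ i),
    ← Finset.erase_eq]
  ring

lemma ip_Eop (w : Ω → ℝ) (i : Fin n) (u v : (Fin n → Ω) → ℝ) :
    ip w (Eop w i u) v = ip w u (Eop w i v) := by
  unfold ip Eop
  have hφ : Function.Involutive (fun p : (Fin n → Ω) × Ω =>
      (Function.update p.1 i p.2, p.1 i)) := by
    intro p
    simp [Function.update_idem, Function.update_eq_self]
  calc ∑ x, prodWeight w x * ((∑ y, w y * u (Function.update x i y)) * v x)
      = ∑ p : (Fin n → Ω) × Ω,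
          prodWeight w p.1 * w p.2 * u (Function.update p.1 i p.2) * v p.1 := by
        rw [Fintype.sum_prod_type]
        refine Finset.sum_congr rfl fun x _ => ?_
        simp only [Finset.mul_sum, Finset.sum_mul]
        exact Finset.sum_congr rfl fun y _ => by ring
    _ = ∑ p : (Fin n → Ω) × Ω,
          prodWeight w p.1 * w p.2 * u p.1 * v (Function.update p.1 i p.2) := by
        rw [← Equiv.sum_comp hφ.toPerm
          (fun p : (Fin n → Ω) × Ω => prodWeight w p.1 * w p.2 * u p.1 * v (Function.update p.1 i p.2))]
        refine Finset.sum_congr rfl fun p _ => ?_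
        simp only [Function.Involutive.coe_toPerm]
        rw [Function.update_idem, Function.update_eq_self]
        have h := pw_update w p.1 i p.2
        linear_combination (-(u (Function.update p.1 i p.2) * v p.1)) * h
    _ = ∑ x, prodWeight w x * (u x * ∑ y, w y * v (Function.update x i y)) := by
        rw [Fintype.sum_prod_type]
        refine Finset.sum_congr rfl fun x _ => ?_
        simp only [Finset.mul_sum, Finset.sum_mul]
        exact Finset.sum_congr rfl fun y _ => by ring

lemma Eop_idem (w : Ω → ℝ) (hw1 : ∑ y, w y = 1) (i : Fin n) (g : (Fin n → Ω) → ℝ) :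
    Eop w i (Eop w i g) = Eop w i g := by
  funext x
  unfold Eop
  have h : ∀ y : Ω, (∑ z, w z * g (Function.update (Function.update x i y) i z))
      = ∑ z, w z * g (Function.update x i z) := by
    intro y; exact Finset.sum_congr rfl fun z _ => by rw [Function.update_idem]
  calc ∑ y, w y * ∑ z, w z * g (Function.update (Function.update x i y) i z)
      = ∑ y, w y * ∑ z, w z * g (Function.update x i z) :=
        Finset.sum_congr rfl fun y _ => by rw [h y]
    _ = (∑ y, w y) * ∑ z, w z * g (Function.update x i z) := by rw [Finset.sum_mul]
    _ = _ := by rw [hw1, one_mul]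

lemma ip_symm (w : Ω → ℝ) (u v : (Fin n → Ω) → ℝ) : ip w u v = ip w v u := by
  unfold ip; exact Finset.sum_congr rfl fun x _ => by ring

lemma ip_self_nonneg (w : Ω → ℝ) (hwpos : ∀ y, 0 < w y) (u : (Fin n → Ω) → ℝ) :
    0 ≤ ip w u u := by
  refine Finset.sum_nonneg fun x _ => mul_nonneg ?_ (mul_self_nonneg _)
  exact le_of_lt (Finset.prod_pos fun j _ => hwpos _)

lemma nrm2sq_eq_ip (w : Ω → ℝ) (f : (Fin n → Ω) → ℝ) : nrm2sq w f = ip w f f := by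
  unfold nrm2sq ip; exact Finset.sum_congr rfl fun x _ => by ring

lemma ip_sub_left (w : Ω → ℝ) (u u' v : (Fin n → Ω) → ℝ) :
    ip w (fun x => u x - u' x) v = ip w u v - ip w u' v := by
  unfold ip; rw [← Finset.sum_sub_distrib]; exact Finset.sum_congr rfl fun x _ => by ring

lemma ip_expand_add (w : Ω → ℝ) (u v : (Fin n → Ω) → ℝ) :
    ip w (fun x => u x + v x) (fun x => u x + v x)
      = ip w u u + 2 * ip w u v + ip w v v := by
  unfold ip
  rw [Finset.mul_sum, ← Finset.sum_add_distrib, ← Finset.sum_add_distrib]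
  exact Finset.sum_congr rfl fun x _ => by ring

lemma Eop_contract (w : Ω → ℝ) (hwpos : ∀ y, 0 < w y) (hw1 : ∑ y, w y = 1)
    (i : Fin n) (g : (Fin n → Ω) → ℝ) :
    ip w (Eop w i g) (Eop w i g) ≤ ip w g g := by
  have h1 : ip w (Eop w i g) (Eop w i g) = ip w g (Eop w i g) := by
    rw [ip_Eop, Eop_idem w hw1]
  have h2 : 0 ≤ ip w (fun x => g x - Eop w i g x) (fun x => g x - Eop w i g x) :=
    ip_self_nonneg w hwpos _
  have h3 : ip w (fun x => g x - Eop w i g x) (fun x => g x - Eop w i g x)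
      = ip w g g - 2 * ip w g (Eop w i g) + ip w (Eop w i g) (Eop w i g) := by
    unfold ip
    rw [Finset.mul_sum, ← Finset.sum_sub_distrib, ← Finset.sum_add_distrib]
    exact Finset.sum_congr rfl fun x _ => by ring
  rw [h3, h1] at h2
  linarith [h2, h1]

lemma Eop_comm (w : Ω → ℝ) {i j : Fin n} (hij : i ≠ j) (g : (Fin n → Ω) → ℝ) :
    Eop w i (Eop w j g) = Eop w j (Eop w i g) := by
  funext x
  unfold Eop
  simp only [Finset.mul_sum]
  rw [Finset.sum_comm]
  refine Finset.sum_congr rfl fun z _ => Finset.sum_congr rfl fun y _ => ?_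
  rw [Function.update_comm hij]
  ring

lemma Eop_sub (w : Ω → ℝ) (i : Fin n) (u v : (Fin n → Ω) → ℝ) :
    Eop w i (fun x => u x - v x) = fun x => Eop w i u x - Eop w i v x := by
  funext x
  unfold Eop
  rw [← Finset.sum_sub_distrib]
  exact Finset.sum_congr rfl fun y _ => by ring

lemma Lcoord_apply (w : Ω → ℝ) (i : Fin n) (f : (Fin n → Ω) → ℝ) (x : Fin n → Ω) :
    Lcoord w i f x = Eop w i f x - f x := rfl

lemma PiT_empty (w : Ω → ℝ) (g : (Fin n → Ω) → ℝ) : PiT w (∅ : Finset (Fin n)) g = g := by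
  funext x
  unfold PiT
  haveI : IsEmpty {i : Fin n // i ∈ (∅ : Finset (Fin n))} :=
    ⟨fun j => (Finset.notMem_empty _ j.2)⟩
  rw [Fintype.sum_unique]
  simp

/-- the reindexing equivalence -/
noncomputable def insEquiv (i : Fin n) (S : Finset (Fin n)) (hi : i ∉ S) :
    (({j // j ∈ S} → Ω) × Ω) ≃ ({j // j ∈ insert i S} → Ω) where
  toFun p := fun j => if h : j.1 ∈ S then p.1 ⟨j.1, h⟩ else p.2
  invFun y := (fun j => y ⟨j.1, Finset.mem_insert_of_mem j.2⟩,
               y ⟨i, Finset.mem_insert_self i S⟩)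
  left_inv p := by
    ext j
    · simp only []
      rw [dif_pos j.2]
    · simp only []
      rw [dif_neg hi]
  right_inv y := by
    funext j
    by_cases h : j.1 ∈ S
    · simp only [dif_pos h]
    · simp only [dif_neg h]
      congr 1
      have := j.2
      rw [Finset.mem_insert] at this
      exact Subtype.ext ((this.resolve_right h).symm)

lemma insEquiv_apply (i : Fin n) (S : Finset (Fin n)) (hi : i ∉ S)
    (p : ({j // j ∈ S} → Ω) × Ω) (j : {j // j ∈ insert i S}) :
    insEquiv i S hi p j = if h : j.1 ∈ S then p.1 ⟨j.1, h⟩ else p.2 := rfl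

lemma PiT_insert (w : Ω → ℝ) (i : Fin n) (S : Finset (Fin n)) (hi : i ∉ S)
    (g : (Fin n → Ω) → ℝ) :
    PiT w (insert i S) g = PiT w S (Eop w i g) := by
  funext x
  unfold PiT Eop
  rw [← Equiv.sum_comp (insEquiv i S hi)
    (fun y : {j // j ∈ insert i S} → Ω => (∏ j : {j // j ∈ insert i S}, w (y j)) *
      g (fun j => if h : j ∈ insert i S then y ⟨j, h⟩ else x j))]
  rw [Fintype.sum_prod_type]
  refine Finset.sum_congr rfl fun z _ => ?_
  rw [Finset.mul_sum]
  refine Finset.sum_congr rfl fun a _ => ?_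
  have hprod : (∏ j : {j // j ∈ insert i S}, w ((insEquiv i S hi) (z, a) j))
      = w a * ∏ j : {j // j ∈ S}, w (z j) := by
    have e1 : (∏ j : {j // j ∈ insert i S}, w ((insEquiv i S hi) (z, a) j))
        = ∏ j ∈ insert i S, (if h : j ∈ S then w (z ⟨j, h⟩) else w a) := by
      rw [Finset.prod_subtype (insert i S) (fun j => Iff.rfl)
        (fun j => if h : j ∈ S then w (z ⟨j, h⟩) else w a)]
      refine Finset.prod_congr rfl fun j _ => ?_
      rw [insEquiv_apply]
      by_cases h : j.1 ∈ S
      · rw [dif_pos h, dif_pos h]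
      · rw [dif_neg h, dif_neg h]
    have e2 : (∏ j : {j // j ∈ S}, w (z j))
        = ∏ j ∈ S, (if h : j ∈ S then w (z ⟨j, h⟩) else w a) := by
      rw [Finset.prod_subtype S (fun j => Iff.rfl)
        (fun j => if h : j ∈ S then w (z ⟨j, h⟩) else w a)]
      exact Finset.prod_congr rfl fun j _ => by rw [dif_pos j.2]
    rw [e1, e2, Finset.prod_insert hi, dif_neg hi]
  have harg : (fun j => if h : j ∈ insert i S then (insEquiv i S hi) (z, a) ⟨j, h⟩ else x j)
      = Function.update (fun j => if h : j ∈ S then z ⟨j, h⟩ else x j) i a := by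
    funext j
    rcases eq_or_ne j i with hj | hj
    · subst hj
      rw [dif_pos (Finset.mem_insert_self j S), Function.update_self, insEquiv_apply,
        dif_neg hi]
    · rw [Function.update_of_ne hj]
      show _ = if h : j ∈ S then z ⟨j, h⟩ else x j
      by_cases hjS : j ∈ S
      · rw [dif_pos (Finset.mem_insert_of_mem hjS), dif_pos hjS, insEquiv_apply, dif_pos hjS]
      · rw [dif_neg hjS, dif_neg (by simp [Finset.mem_insert, hj, hjS])]
  rw [hprod, harg]
  ring

lemma Eop_PiT (w : Ω → ℝ) {i : Fin n} {S : Finset (Fin n)} (hi : i ∉ S)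
    (u : (Fin n → Ω) → ℝ) :
    Eop w i (PiT w S u) = PiT w S (Eop w i u) := by
  funext x
  unfold Eop PiT
  simp only [Finset.mul_sum]
  rw [Finset.sum_comm]
  refine Finset.sum_congr rfl fun z _ => Finset.sum_congr rfl fun a _ => ?_
  have harg : (fun j => if h : j ∈ S then z ⟨j, h⟩ else Function.update x i a j)
      = Function.update (fun j => if h : j ∈ S then z ⟨j, h⟩ else x j) i a := by
    funext j
    simp only [Function.update_apply]
    rcases eq_or_ne j i with hj | hj
    · subst hj
      simp [hi]
    · by_cases hjS : j ∈ S <;> simp [hj, hjS]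
  rw [harg]
  ring

lemma ip_orth (w : Ω → ℝ) (i : Fin n) (g h : (Fin n → Ω) → ℝ) (hh : Eop w i h = h) :
    ip w (fun x => g x - Eop w i g x) h = 0 := by
  rw [ip_sub_left, ip_Eop, hh, sub_self]

lemma lemA (w : Ω → ℝ) (hwpos : ∀ y, 0 < w y) (hw1 : ∑ y, w y = 1) :
    ∀ (T : Finset (Fin n)) (g : (Fin n → Ω) → ℝ),
    nrm2sq w (fun x => g x - PiT w T g x) ≤ ∑ i ∈ T, nrm2sq w (Lcoord w i g) := by
  intro T
  induction T using Finset.induction_on with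
  | empty =>
    intro g
    rw [PiT_empty]
    simp [nrm2sq]
  | @insert i S hi ih =>
    intro g
    set Eg := Eop w i g with hEg
    have hkey : (fun x => g x - PiT w (insert i S) g x)
        = fun x => (g x - Eg x) + (Eg x - PiT w S Eg x) := by
      funext x
      rw [PiT_insert w i S hi]
      ring
    rw [hkey, nrm2sq_eq_ip, ip_expand_add]
    have hfix : Eop w i (fun x => Eg x - PiT w S Eg x)
        = fun x => Eg x - PiT w S Eg x := by
      rw [Eop_sub]
      have h1 : Eop w i Eg = Eg := Eop_idem w hw1 i g
      have h2 : Eop w i (PiT w S Eg) = PiT w S Eg := by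
        rw [Eop_PiT w hi, h1]
      rw [h1, h2]
    have horth : ip w (fun x => g x - Eg x) (fun x => Eg x - PiT w S Eg x) = 0 :=
      ip_orth w i g _ hfix
    have ha : ip w (fun x => g x - Eg x) (fun x => g x - Eg x)
        = nrm2sq w (Lcoord w i g) := by
      rw [nrm2sq_eq_ip]
      unfold ip
      refine Finset.sum_congr rfl fun x _ => ?_
      rw [Lcoord_apply]
      ring
    have hb : ip w (fun x => Eg x - PiT w S Eg x) (fun x => Eg x - PiT w S Eg x)
        ≤ ∑ j ∈ S, nrm2sq w (Lcoord w j g) := by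
      have h1 : ip w (fun x => Eg x - PiT w S Eg x) (fun x => Eg x - PiT w S Eg x)
          = nrm2sq w (fun x => Eg x - PiT w S Eg x) := (nrm2sq_eq_ip w _).symm
      rw [h1]
      refine le_trans (ih Eg) (Finset.sum_le_sum fun j hj => ?_)
      have hji : j ≠ i := fun h => hi (h ▸ hj)
      have hcomm : Lcoord w j Eg = Eop w i (Lcoord w j g) := by
        have : Eop w i (fun x => Eop w j g x - g x)
            = fun x => Eop w i (Eop w j g) x - Eop w i g x := Eop_sub w i _ _
        funext x
        rw [Lcoord_apply]
        have hL : Lcoord w j g = fun x => Eop w j g x - g x := by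
          funext x; rw [Lcoord_apply]
        rw [hL, this, Eop_comm w hji.symm]
      rw [hcomm, nrm2sq_eq_ip, nrm2sq_eq_ip]
      exact Eop_contract w hwpos hw1 i _
    rw [Finset.sum_insert hi]
    linarith [ha, hb, horth]

lemma Lcoord_comm (w : Ω → ℝ) (i j : Fin n) (g : (Fin n → Ω) → ℝ) :
    Lcoord w i (Lcoord w j g) = Lcoord w j (Lcoord w i g) := by
  rcases eq_or_ne i j with h | h
  · rw [h]
  · have hL : ∀ (k : Fin n) (u : (Fin n → Ω) → ℝ),
        Lcoord w k u = fun x => Eop w k u x - u x := by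
      intro k u; funext x; rw [Lcoord_apply]
    have e1 : Eop w i (Lcoord w j g) = fun x => Eop w i (Eop w j g) x - Eop w i g x := by
      rw [hL j g]; exact Eop_sub w i _ _
    have e2 : Eop w j (Lcoord w i g) = fun x => Eop w j (Eop w i g) x - Eop w j g x := by
      rw [hL i g]; exact Eop_sub w j _ _
    funext x
    have l1 : Lcoord w i (Lcoord w j g) x = Eop w i (Lcoord w j g) x - Lcoord w j g x :=
      Lcoord_apply w i _ x
    have l2 : Lcoord w j (Lcoord w i g) x = Eop w j (Lcoord w i g) x - Lcoord w i g x :=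
      Lcoord_apply w j _ x
    rw [l1, l2, e1, e2]
    simp only [Lcoord_apply]
    rw [Eop_comm w h]
    ring

lemma Psemi_Lcoord (w : Ω → ℝ) (i : Fin n) (t : ℝ) (f : (Fin n → Ω) → ℝ) :
    Lcoord w i (Psemi w n t f) = Psemi w n t (Lcoord w i f) := by
  set Li := LinearMap.toContinuousLinearMap (Lcoord w i) with hLi
  set A := LinearMap.toContinuousLinearMap (Ltot w n) with hA
  have hAL : Commute A Li := by
    show A * Li = Li * A
    ext g x
    show A (Li g) x = Li (A g) x
    simp only [hA, hLi, LinearMap.coe_toContinuousLinearMap']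
    show Ltot w n (Lcoord w i g) x = Lcoord w i (Ltot w n g) x
    unfold Ltot
    rw [LinearMap.sum_apply, LinearMap.sum_apply, map_sum, Finset.sum_apply,
      Finset.sum_apply]
    exact Finset.sum_congr rfl fun j _ => congrFun (Lcoord_comm w j i g) x
  have hcomm : Commute (t • A) Li := hAL.smul_left t
  have hexp : Commute (NormedSpace.exp (t • A)) Li := hcomm.exp_left
  have hfun := congrArg (fun (M : ((Fin n → Ω) → ℝ) →L[ℝ] ((Fin n → Ω) → ℝ)) => M f) hexp.eq
  simp only [ContinuousLinearMap.mul_apply] at hfun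
  unfold Psemi
  rw [← hA]
  have hLi' : ∀ u, Lcoord w i u = Li u := fun u => rfl
  rw [hLi' (NormedSpace.exp (t • A) f), ← hfun]
  rfl

/-- Let `Ω` be a finite set with full-support probability measure `μ`,
and assume the product semigroup `(P_t)` on `Ωⁿ` is hypercontractive with constant `ρ > 0`.
Let `f : Ωⁿ → ℝ` satisfy `max_i ‖L_i f‖_∞ ≤ 1`, let `η > 0`, `t > 0`, and let
`T ⊆ {1,…,n}` be such that `I_i(f) ≤ η` for every `i ∈ T`. Then
`‖P_t f − Π_T P_t f‖²_{L²(μ^{⊗n})} ≤ I(f) · η^{(1−e^{−2ρt})/(1+e^{−2ρt})}`. -/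
theorem stmt3
    (w : Ω → ℝ) (hwpos : ∀ x, 0 < w x) (hw1 : ∑ x, w x = 1)
    (ρ : ℝ) (hρ : 0 < ρ)
    (hhyper : ∀ s : ℝ, 0 < s → ∀ g : (Fin n → Ω) → ℝ,
      Real.sqrt (nrm2sq w (Psemi w n s g)) ≤ nrmp w (1 + Real.exp (-2 * ρ * s)) g)
    (f : (Fin n → Ω) → ℝ) (hbdd : ∀ i : Fin n, ∀ x, |Lcoord w i f x| ≤ 1)
    (η : ℝ) (hη : 0 < η) (t : ℝ) (ht : 0 < t)
    (T : Finset (Fin n)) (hT : ∀ i ∈ T, influence w i f ≤ η) :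
    nrm2sq w (fun x => Psemi w n t f x - PiT w T (Psemi w n t f) x) ≤
      (∑ i : Fin n, influence w i f) *
        η ^ ((1 - Real.exp (-2 * ρ * t)) / (1 + Real.exp (-2 * ρ * t))) := by
  set e := Real.exp (-2 * ρ * t) with he
  set p := 1 + e with hp
  set α := (1 - e) / (1 + e) with hα
  have he0 : 0 < e := Real.exp_pos _
  have he1 : e < 1 := by
    rw [he, Real.exp_lt_one_iff]
    nlinarith
  have hp1 : 1 < p := by rw [hp]; linarith
  have hp0 : 0 < p := by linarith
  have hα0 : 0 ≤ α := div_nonneg (by linarith) (by linarith)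
  have h2p : 2 / p = 1 + α := by
    rw [hα, hp]
    field_simp
    ring
  have pwpos : ∀ x : Fin n → Ω, 0 < prodWeight w x :=
    fun x => Finset.prod_pos fun j _ => hwpos _
  have nrm1nonneg : ∀ g : (Fin n → Ω) → ℝ, 0 ≤ nrm1 w g := fun g =>
    Finset.sum_nonneg fun x _ => mul_nonneg (pwpos x).le (abs_nonneg _)
  have key : ∀ i ∈ T, nrm2sq w (Psemi w n t (Lcoord w i f)) ≤ influence w i f * η ^ α := by
    intro i hiT
    set h := Lcoord w i f with hh
    have hIη : nrm1 w h ≤ η := hT i hiT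
    have hs := hhyper t ht h
    rw [← he, ← hp] at hs
    have hnn : 0 ≤ nrm2sq w (Psemi w n t h) :=
      Finset.sum_nonneg fun x _ => mul_nonneg (pwpos x).le (sq_nonneg _)
    have hsum_nn : 0 ≤ ∑ x, prodWeight w x * |h x| ^ p :=
      Finset.sum_nonneg fun x _ => mul_nonneg (pwpos x).le (Real.rpow_nonneg (abs_nonneg _) _)
    have hnrmp : 0 ≤ nrmp w p h := Real.rpow_nonneg hsum_nn _
    have h1 : nrm2sq w (Psemi w n t h) ≤ (nrmp w p h) ^ 2 := by
      have hsq := Real.sq_sqrt hnn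
      nlinarith [Real.sqrt_nonneg (nrm2sq w (Psemi w n t h)), hs, hnrmp]
    have h2 : nrmp w p h ≤ (nrm1 w h) ^ (1 / p) := by
      unfold nrmp
      refine Real.rpow_le_rpow hsum_nn ?_ (one_div_nonneg.mpr hp0.le)
      unfold nrm1
      refine Finset.sum_le_sum fun x _ => ?_
      refine mul_le_mul_of_nonneg_left ?_ (pwpos x).le
      rcases eq_or_lt_of_le (abs_nonneg (h x)) with h0 | h0
      · rw [← h0, Real.zero_rpow (ne_of_gt hp0)]
      · calc |h x| ^ p ≤ |h x| ^ (1 : ℝ) :=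
            Real.rpow_le_rpow_of_exponent_ge h0 (hbdd i x) hp1.le
          _ = |h x| := Real.rpow_one _
    have h3 : (nrmp w p h) ^ 2 ≤ ((nrm1 w h) ^ (1 / p)) ^ 2 :=
      pow_le_pow_left₀ hnrmp h2 2
    have h4 : ((nrm1 w h) ^ (1 / p)) ^ 2 = (nrm1 w h) ^ (2 / p) := by
      rw [← Real.rpow_natCast ((nrm1 w h) ^ (1 / p)) 2, ← Real.rpow_mul (nrm1nonneg h)]
      push_cast
      congr 1
      ring
    have h5 : (nrm1 w h) ^ (2 / p) ≤ nrm1 w h * η ^ α := by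
      rw [h2p]
      rcases eq_or_lt_of_le (nrm1nonneg h) with h0 | h0
      · rw [← h0, Real.zero_rpow (by positivity), zero_mul]
      · rw [Real.rpow_add h0, Real.rpow_one]
        exact mul_le_mul_of_nonneg_left (Real.rpow_le_rpow h0.le hIη hα0) h0.le
    calc nrm2sq w (Psemi w n t h) ≤ (nrmp w p h) ^ 2 := h1
      _ ≤ ((nrm1 w h) ^ (1 / p)) ^ 2 := h3
      _ = (nrm1 w h) ^ (2 / p) := h4
      _ ≤ nrm1 w h * η ^ α := h5
      _ = influence w i f * η ^ α := rfl
  calc nrm2sq w (fun x => Psemi w n t f x - PiT w T (Psemi w n t f) x)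
      ≤ ∑ i ∈ T, nrm2sq w (Lcoord w i (Psemi w n t f)) := lemA w hwpos hw1 T _
    _ = ∑ i ∈ T, nrm2sq w (Psemi w n t (Lcoord w i f)) :=
        Finset.sum_congr rfl fun i _ => by rw [Psemi_Lcoord]
    _ ≤ ∑ i ∈ T, influence w i f * η ^ α := Finset.sum_le_sum key
    _ ≤ ∑ i : Fin n, influence w i f * η ^ α :=
        Finset.sum_le_sum_of_subset_of_nonneg (Finset.subset_univ T)
          (fun i _ _ => mul_nonneg (nrm1nonneg _) (Real.rpow_nonneg hη.le _))
    _ = (∑ i : Fin n, influence w i f) * η ^ α := by rw [Finset.sum_mul]
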